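/- Let n ≥ 3, k a field of characteristic zero, Χ and V vector spaces over k. For every multilinear map L : Χ^n → V in F_L one has Ψ(Φ_R(L), Φ_T(L)) = L; that is, for all X_1,…,X_n ∈ Χ: −3Φ_R(L)(X_1,…,X_n) − Φ_R(L)(X_1,…,X_{n−3},X_{n−1},X_n,X_{n−2}) + Φ_R(L)(X_1,…,X_{n−3},X_n,X_{n−2},X_{n−1}) + 2Φ_T(L)(X_1,…,X_n) − 2Φ_T(L)(X_1,…,X_{n−3},X_{n−1},X_n,X_{n−2}) = L(X_1,…,X_n). -/

import Mathlib

/- Common setup: indices of the last four slots (1-indexed slots `n-3`, `n-2`, `n-1`, `n`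
correspond to the `Fin n` elements `p4`, `p3`, `p2`, `p1` below), and the conditions
(l1)-(l4), (b1), (b3), (b4), (t1), (t2), (aa) together with the maps `Φ_R`, `Φ_T`, `Ψ`. -/

/-- The slot `n` (1-indexed). -/
def p1 {n : ℕ} (_h : 3 ≤ n) : Fin n := ⟨n - 1, by omega⟩
/-- The slot `n-1` (1-indexed). -/
def p2 {n : ℕ} (_h : 3 ≤ n) : Fin n := ⟨n - 2, by omega⟩
/-- The slot `n-2` (1-indexed). -/
def p3 {n : ℕ} (_h : 3 ≤ n) : Fin n := ⟨n - 3, by omega⟩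
/-- The slot `n-3` (1-indexed); only meaningful when `4 ≤ n`. -/
def p4 {n : ℕ} (_h : 3 ≤ n) : Fin n := ⟨n - 4, by omega⟩

section Conditions

variable {n : ℕ} {M V : Type*} [AddCommGroup V]

/-- (l1): the sum of `L` over all six permutations of the last three slots vanishes. -/
def CondL1 (h : 3 ≤ n) (L : (Fin n → M) → V) : Prop :=
  ∀ x : Fin n → M,
    L x + L (x ∘ ⇑(Equiv.swap (p3 h) (p2 h))) + L (x ∘ ⇑(Equiv.swap (p3 h) (p1 h)))
      + L (x ∘ ⇑(Equiv.swap (p2 h) (p1 h)))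
      + L (x ∘ ⇑(Equiv.swap (p3 h) (p2 h) * Equiv.swap (p2 h) (p1 h)))
      + L (x ∘ ⇑(Equiv.swap (p2 h) (p1 h) * Equiv.swap (p3 h) (p2 h))) = 0

/-- (l2): the signed sum of `L` over all six permutations of the slots `n-3`, `n-2`, `n-1`
(1-indexed) vanishes. -/
def CondL2 (h : 3 ≤ n) (L : (Fin n → M) → V) : Prop :=
  ∀ x : Fin n → M,
    L x - L (x ∘ ⇑(Equiv.swap (p4 h) (p3 h))) - L (x ∘ ⇑(Equiv.swap (p4 h) (p2 h)))
      - L (x ∘ ⇑(Equiv.swap (p3 h) (p2 h)))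
      + L (x ∘ ⇑(Equiv.swap (p4 h) (p3 h) * Equiv.swap (p3 h) (p2 h)))
      + L (x ∘ ⇑(Equiv.swap (p3 h) (p2 h) * Equiv.swap (p4 h) (p3 h))) = 0

/-- (l3): `L` is symmetric in its first `n-3` arguments. -/
def CondL3 (h : 3 ≤ n) (L : (Fin n → M) → V) : Prop :=
  ∀ ω : Equiv.Perm (Fin n), ω (p3 h) = p3 h → ω (p2 h) = p2 h → ω (p1 h) = p1 h →
    ∀ x : Fin n → M, L (x ∘ ⇑ω) = L x

/-- (l4): the signed sum of `L` over permutations `τ` of slots `{n-3, n-2}` and `λ` of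
slots `{n-1, n}` (1-indexed) vanishes. -/
def CondL4 (h : 3 ≤ n) (L : (Fin n → M) → V) : Prop :=
  ∀ x : Fin n → M,
    L x - L (x ∘ ⇑(Equiv.swap (p4 h) (p3 h))) - L (x ∘ ⇑(Equiv.swap (p2 h) (p1 h)))
      + L (x ∘ ⇑(Equiv.swap (p4 h) (p3 h) * Equiv.swap (p2 h) (p1 h))) = 0

/-- (b1): antisymmetry of `R` in the slots `n-2`, `n-1` (1-indexed). -/
def CondB1 (h : 3 ≤ n) (R : (Fin n → M) → V) : Prop :=
  ∀ x : Fin n → M, R x + R (x ∘ ⇑(Equiv.swap (p3 h) (p2 h))) = 0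

/-- (b3): the cyclic sum of `R` over cyclic permutations of the slots `n-3`, `n-2`, `n-1`
(1-indexed) vanishes. -/
def CondB3 (h : 3 ≤ n) (R : (Fin n → M) → V) : Prop :=
  ∀ x : Fin n → M,
    R x + R (x ∘ ⇑(Equiv.swap (p4 h) (p3 h) * Equiv.swap (p3 h) (p2 h)))
      + R (x ∘ ⇑((Equiv.swap (p4 h) (p3 h) * Equiv.swap (p3 h) (p2 h))
            * (Equiv.swap (p4 h) (p3 h) * Equiv.swap (p3 h) (p2 h)))) = 0

/-- (b4): `R` is symmetric in its first `n-3` arguments. -/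
def CondB4 (h : 3 ≤ n) (R : (Fin n → M) → V) : Prop :=
  ∀ ω : Equiv.Perm (Fin n), ω (p3 h) = p3 h → ω (p2 h) = p2 h → ω (p1 h) = p1 h →
    ∀ x : Fin n → M, R (x ∘ ⇑ω) = R x

/-- (t1): antisymmetry of `T` in the last two slots. -/
def CondT1 (h : 3 ≤ n) (T : (Fin n → M) → V) : Prop :=
  ∀ x : Fin n → M, T x + T (x ∘ ⇑(Equiv.swap (p2 h) (p1 h))) = 0

/-- (t2): `T` is symmetric in its first `n-2` arguments. -/
def CondT2 (h : 3 ≤ n) (T : (Fin n → M) → V) : Prop :=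
  ∀ ω : Equiv.Perm (Fin n), ω (p2 h) = p2 h → ω (p1 h) = p1 h →
    ∀ x : Fin n → M, T (x ∘ ⇑ω) = T x

/-- (aa): the cyclic sum of `R + T` over cyclic permutations of the last three slots vanishes. -/
def CondAA (h : 3 ≤ n) (R T : (Fin n → M) → V) : Prop :=
  ∀ x : Fin n → M,
    (R x + T x)
      + (R (x ∘ ⇑(Equiv.swap (p3 h) (p2 h) * Equiv.swap (p2 h) (p1 h)))
          + T (x ∘ ⇑(Equiv.swap (p3 h) (p2 h) * Equiv.swap (p2 h) (p1 h))))
      + (R (x ∘ ⇑((Equiv.swap (p3 h) (p2 h) * Equiv.swap (p2 h) (p1 h))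
            * (Equiv.swap (p3 h) (p2 h) * Equiv.swap (p2 h) (p1 h))))
          + T (x ∘ ⇑((Equiv.swap (p3 h) (p2 h) * Equiv.swap (p2 h) (p1 h))
            * (Equiv.swap (p3 h) (p2 h) * Equiv.swap (p2 h) (p1 h))))) = 0

end Conditions

/-- `Φ_R(L)(X₁,…,Xₙ) = (1/6)[L(X₁,…,X_{n-3},X_{n-1},X_{n-2},X_n) − L(X₁,…,Xₙ)]`. -/
def PhiR (k : Type*) [Field k] {n : ℕ} {M V : Type*} [AddCommGroup V] [Module k V]
    (h : 3 ≤ n) (L : (Fin n → M) → V) : (Fin n → M) → V :=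
  fun x => (6 : k)⁻¹ • (L (x ∘ ⇑(Equiv.swap (p3 h) (p2 h))) - L x)

/-- `Φ_T(L)(X₁,…,Xₙ) = (1/6)[L(X₁,…,Xₙ) − L(X₁,…,X_{n-2},X_n,X_{n-1})]`. -/
def PhiT (k : Type*) [Field k] {n : ℕ} {M V : Type*} [AddCommGroup V] [Module k V]
    (h : 3 ≤ n) (L : (Fin n → M) → V) : (Fin n → M) → V :=
  fun x => (6 : k)⁻¹ • (L x - L (x ∘ ⇑(Equiv.swap (p2 h) (p1 h))))

/-- `Ψ(R,T)(X₁,…,Xₙ) = −3R(X₁,…,Xₙ) − R(…,X_{n-1},X_n,X_{n-2}) + R(…,X_n,X_{n-2},X_{n-1})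
+ 2T(X₁,…,Xₙ) − 2T(…,X_{n-1},X_n,X_{n-2})`. -/
def Psi {n : ℕ} {M V : Type*} [AddCommGroup V]
    (h : 3 ≤ n) (R T : (Fin n → M) → V) : (Fin n → M) → V :=
  fun x =>
    -((3 : ℤ) • R x) - R (x ∘ ⇑(Equiv.swap (p3 h) (p2 h) * Equiv.swap (p2 h) (p1 h)))
      + R (x ∘ ⇑(Equiv.swap (p3 h) (p2 h) * Equiv.swap (p2 h) (p1 h))⁻¹)
      + (2 : ℤ) • T x
      - (2 : ℤ) • T (x ∘ ⇑(Equiv.swap (p3 h) (p2 h) * Equiv.swap (p2 h) (p1 h)))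

/-- for every multilinear map `L` in `F_L` one has `Ψ(Φ_R(L), Φ_T(L)) = L`. -/
theorem statement2 {k : Type*} [Field k] [CharZero k] {M V : Type*}
    [AddCommGroup M] [Module k M] [AddCommGroup V] [Module k V]
    {n : ℕ} (hn : 3 ≤ n)
    (L : MultilinearMap k (fun _ : Fin n => M) V)
    (hl1 : CondL1 hn ⇑L)
    (hl2 : 4 ≤ n → CondL2 hn ⇑L)
    (hl3 : 4 ≤ n → CondL3 hn ⇑L)
    (hl4 : 4 ≤ n → CondL4 hn ⇑L) :
    ∀ x : Fin n → M, Psi hn (PhiR k hn ⇑L) (PhiT k hn ⇑L) x = L x := by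

  intro x
  have h32 : p3 hn ≠ p2 hn := by simp [p3, p2, Fin.ext_iff]; omega
  have h21 : p2 hn ≠ p1 hn := by simp [p2, p1, Fin.ext_iff]; omega
  have h12 : p1 hn ≠ p2 hn := h21.symm
  have h13 : p1 hn ≠ p3 hn := by simp [p1, p3, Fin.ext_iff]; omega
  set a := Equiv.swap (p3 hn) (p2 hn) with ha
  set b := Equiv.swap (p2 hn) (p1 hn) with hb
  have ea : a * b * a = Equiv.swap (p3 hn) (p1 hn) := by
    rw [ha, hb, Equiv.swap_comm (p3 hn) (p2 hn), Equiv.swap_comm (p2 hn) (p1 hn),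
      Equiv.swap_mul_swap_mul_swap h12 h13]
  have einv : (a * b)⁻¹ = b * a := by
    rw [mul_inv_rev, ha, hb, Equiv.swap_inv, Equiv.swap_inv]
  have eba : b * a * a = b := by
    rw [mul_assoc, ha, Equiv.swap_mul_self, mul_one]
  have eab : a * b * b = a := by
    rw [mul_assoc, hb, Equiv.swap_mul_self, mul_one]
  have H := hl1 x
  rw [ha, hb] at ea einv eba eab
  simp only [Psi, PhiR, PhiT, Function.comp_assoc, ← Equiv.Perm.coe_mul, einv, ea, eba,
    eab] at H ⊢
  linear_combination (norm := module) (-(6:k)⁻¹) • H
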